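/- For all reals a > 0 and b > 0: ∫₀¹ x^{a−1} (1−x)^{b−1} log x dx = B(a,b) · (ψ₀(a) − ψ₀(a+b)). -/

import Mathlib

open MeasureTheory Real

/-- The digamma function `ψ₀(x) = d/dx log Γ(x)`. -/
noncomputable def digamma (x : ℝ) : ℝ := deriv (fun y => Real.log (Real.Gamma y)) x

/-- The Beta function `B(a,b) = Γ(a)Γ(b)/Γ(a+b)`. -/
noncomputable def betaFn (a b : ℝ) : ℝ := Real.Gamma a * Real.Gamma b / Real.Gamma (a + b)

private lemma key_eq {p q x : ℝ} (hx0 : 0 ≤ x) (hx1 : x ≤ 1) :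
    (x : ℂ) ^ ((p : ℂ) - 1) * (1 - (x : ℂ)) ^ ((q : ℂ) - 1)
      = ((x ^ (p - 1) * (1 - x) ^ (q - 1) : ℝ) : ℂ) := by
  rw [Complex.ofReal_mul, Complex.ofReal_cpow hx0,
    Complex.ofReal_cpow (by linarith : (0:ℝ) ≤ 1 - x)]
  push_cast
  ring

private lemma beta_integrable {p q : ℝ} (hp : 0 < p) (hq : 0 < q) :
    IntegrableOn (fun x : ℝ => x ^ (p - 1) * (1 - x) ^ (q - 1)) (Set.Ioo 0 1) := by
  have hc := Complex.betaIntegral_convergent (u := p) (v := q) (by simpa) (by simpa)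
  rw [intervalIntegrable_iff_integrableOn_Ioc_of_le zero_le_one] at hc
  have h2 : IntegrableOn (fun x : ℝ => x ^ (p - 1) * (1 - x) ^ (q - 1)) (Set.Ioc 0 1) := by
    refine (IntegrableOn.congr_fun hc.re ?_ measurableSet_Ioc)
    intro x hx
    have := key_eq (p := p) (q := q) hx.1.le hx.2
    simp only [this]
    simp
  exact h2.mono_set Set.Ioo_subset_Ioc_self

private lemma beta_value {p q : ℝ} (hp : 0 < p) (hq : 0 < q) :
    ∫ x in Set.Ioo (0:ℝ) 1, x ^ (p - 1) * (1 - x) ^ (q - 1) = betaFn p q := by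
  have h := Complex.Gamma_mul_Gamma_eq_betaIntegral (s := p) (t := q) (by simpa) (by simpa)
  have hbi : Complex.betaIntegral p q
      = ((∫ x in Set.Ioo (0:ℝ) 1, x ^ (p-1) * (1-x) ^ (q-1) : ℝ) : ℂ) := by
    have h1 : Complex.betaIntegral p q
        = ∫ x : ℝ in (0:ℝ)..1, ((x ^ (p-1) * (1-x) ^ (q-1) : ℝ) : ℂ) := by
      rw [Complex.betaIntegral]
      refine intervalIntegral.integral_congr fun x hx => ?_
      rw [Set.uIcc_of_le zero_le_one] at hx
      exact key_eq hx.1 hx.2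
    rw [h1, intervalIntegral.integral_ofReal, intervalIntegral.integral_of_le zero_le_one,
      MeasureTheory.integral_Ioc_eq_integral_Ioo]
  rw [hbi, ← Complex.ofReal_add, Complex.Gamma_ofReal, Complex.Gamma_ofReal,
    Complex.Gamma_ofReal, ← Complex.ofReal_mul, ← Complex.ofReal_mul] at h
  have h' := Complex.ofReal_injective h
  have hΓ : Real.Gamma (p + q) ≠ 0 := (Real.Gamma_pos_of_pos (by linarith)).ne'
  rw [betaFn]
  field_simp
  linarith [h']

private lemma gamma_ne_neg {a : ℝ} (ha : 0 < a) : ∀ m : ℕ, a ≠ -m := by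
  intro m h
  have : (0:ℝ) ≤ m := Nat.cast_nonneg m
  linarith

private lemma digamma_eq {a : ℝ} (ha : 0 < a) :
    digamma a = deriv Real.Gamma a / Real.Gamma a := by
  rw [digamma]
  exact deriv.log (Real.differentiableAt_Gamma (gamma_ne_neg ha))
    (Real.Gamma_pos_of_pos ha).ne'

/-- For `a, b > 0`, `∫₀¹ x^{a−1} (1−x)^{b−1} log x dx = B(a,b) (ψ₀(a) − ψ₀(a+b))`. -/
theorem beta_log_integral (a b : ℝ) (ha : 0 < a) (hb : 0 < b) :
    ∫ x in Set.Ioo (0 : ℝ) 1, x ^ (a - 1) * (1 - x) ^ (b - 1) * Real.log x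
      = betaFn a b * (digamma a - digamma (a + b)) := by
  set μ := volume.restrict (Set.Ioo (0:ℝ) 1) with hμ
  set F : ℝ → ℝ → ℝ := fun t x => x ^ (t - 1) * (1 - x) ^ (b - 1) with hF
  set F' : ℝ → ℝ → ℝ := fun t x => x ^ (t - 1) * (1 - x) ^ (b - 1) * Real.log x with hF'
  have hmeas : ∀ t : ℝ, AEStronglyMeasurable (F t) μ := by
    intro t
    refine ContinuousOn.aestronglyMeasurable ?_ measurableSet_Ioo
    exact (continuousOn_id.rpow_const fun x hx => Or.inl hx.1.ne').mul
      ((continuousOn_const.sub continuousOn_id).rpow_const fun x hx => Or.inl (by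
        simp only [Set.mem_Ioo] at hx; intro h; simp only [Pi.sub_apply, id] at h; linarith [hx.2]))
  have hmeas' : AEStronglyMeasurable (F' a) μ := by
    refine ContinuousOn.aestronglyMeasurable ?_ measurableSet_Ioo
    refine ContinuousOn.mul ?_ (continuousOn_id.log fun x hx => hx.1.ne')
    exact (continuousOn_id.rpow_const fun x hx => Or.inl hx.1.ne').mul
      ((continuousOn_const.sub continuousOn_id).rpow_const fun x hx => Or.inl (by
        simp only [Set.mem_Ioo] at hx; intro h; simp only [Pi.sub_apply, id] at h; linarith [hx.2]))
  have hbound_int : Integrable (fun x : ℝ => (4 / a) * (x ^ (a/4 - 1) * (1 - x) ^ (b - 1))) μ :=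
    ((beta_integrable (by linarith : (0:ℝ) < a/4) hb).const_mul _)
  have h_bound : ∀ᵐ x ∂μ, ∀ t ∈ Metric.ball a (a/2), ‖F' t x‖
      ≤ (4 / a) * (x ^ (a/4 - 1) * (1 - x) ^ (b - 1)) := by
    rw [hμ, ae_restrict_iff' measurableSet_Ioo]
    refine ae_of_all _ fun x hx t ht => ?_
    obtain ⟨hx0, hx1⟩ := hx
    rw [Real.norm_eq_abs, abs_mul, abs_mul,
      abs_of_nonneg (Real.rpow_nonneg hx0.le _), abs_of_nonneg (Real.rpow_nonneg (by linarith) _)]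
    have hlog : |Real.log x| ≤ (4 / a) * x ^ (-(a/4)) := by
      rw [abs_of_nonpos (Real.log_nonpos hx0.le hx1.le), ← Real.log_inv]
      have := Real.log_le_rpow_div (x := x⁻¹) (by positivity) (by positivity : (0:ℝ) < a/4)
      rw [Real.inv_rpow hx0.le] at this
      calc Real.log x⁻¹ ≤ (x ^ (a/4))⁻¹ / (a/4) := this
        _ = (4 / a) * x ^ (-(a/4)) := by
            rw [Real.rpow_neg hx0.le]
            ring
    have hpow : x ^ (t - 1) ≤ x ^ (a/2 - 1) := by
      refine Real.rpow_le_rpow_of_exponent_ge hx0 hx1.le ?_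
      have := abs_lt.1 (mem_ball_iff_norm.1 ht)
      have h2 : |t - a| < a/2 := by simpa [Real.dist_eq] using ht
      have := abs_lt.1 h2
      linarith
    calc x ^ (t - 1) * (1 - x) ^ (b - 1) * |Real.log x|
        ≤ x ^ (a/2 - 1) * (1 - x) ^ (b - 1) * ((4 / a) * x ^ (-(a/4))) := by
          refine mul_le_mul (mul_le_mul_of_nonneg_right hpow (Real.rpow_nonneg (by linarith) _))
            hlog (abs_nonneg _) (mul_nonneg (Real.rpow_nonneg hx0.le _)
              (Real.rpow_nonneg (by linarith) _))
      _ = (4 / a) * (x ^ (a/4 - 1) * (1 - x) ^ (b - 1)) := by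
          rw [show (a/4 - 1 : ℝ) = (a/2 - 1) + (-(a/4)) by ring, Real.rpow_add hx0]
          ring
  have h_diff : ∀ᵐ x ∂μ, ∀ t ∈ Metric.ball a (a/2), HasDerivAt (F · x) (F' t x) t := by
    rw [hμ, ae_restrict_iff' measurableSet_Ioo]
    refine ae_of_all _ fun x hx t _ => ?_
    have h1 : HasDerivAt (fun t : ℝ => x ^ (t - 1)) (x ^ (t - 1) * Real.log x) t := by
      have := (Real.hasStrictDerivAt_const_rpow hx.1 (t - 1)).hasDerivAt
      have h2 := this.comp t ((hasDerivAt_id t).sub_const 1)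
      simpa [Function.comp_def] using h2
    have := h1.mul_const ((1 - x) ^ (b - 1))
    rw [show F' t x = x ^ (t - 1) * Real.log x * (1 - x) ^ (b - 1) by
      show x ^ (t - 1) * (1 - x) ^ (b - 1) * Real.log x = x ^ (t - 1) * Real.log x * (1 - x) ^ (b - 1)
      ring]
    exact this
  have main := hasDerivAt_integral_of_dominated_loc_of_deriv_le
    (μ := μ) (x₀ := a) (F := F) (F' := F') (bound := fun x => (4 / a) * (x ^ (a/4 - 1) * (1 - x) ^ (b - 1)))
    (Metric.ball_mem_nhds a (by positivity : (0:ℝ) < a/2)) (Filter.Eventually.of_forall hmeas)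
    (beta_integrable ha hb) hmeas' h_bound hbound_int h_diff
  have hInt : HasDerivAt (fun t => ∫ x, F t x ∂μ) (∫ x, F' a x ∂μ) a := main.2
  -- identify the function with betaFn · b near a
  have hev : (fun t => ∫ x, F t x ∂μ) =ᶠ[nhds a] fun t => betaFn t b := by
    filter_upwards [eventually_gt_nhds ha] with t ht
    exact beta_value ht hb
  have hInt' : HasDerivAt (fun t => betaFn t b) (∫ x, F' a x ∂μ) a := hInt.congr_of_eventuallyEq hev.symm
  -- compute derivative of betaFn · b at a
  have hΓa : HasDerivAt Real.Gamma (deriv Real.Gamma a) a :=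
    (Real.differentiableAt_Gamma (gamma_ne_neg ha)).hasDerivAt
  have hΓab : HasDerivAt Real.Gamma (deriv Real.Gamma (a + b)) (a + b) :=
    (Real.differentiableAt_Gamma (gamma_ne_neg (by linarith))).hasDerivAt
  have hcomp : HasDerivAt (fun t => Real.Gamma (t + b)) (deriv Real.Gamma (a + b)) a := by
    have := hΓab.comp a ((hasDerivAt_id a).add_const b)
    simpa [Function.comp_def] using this
  have hΓabne : Real.Gamma (a + b) ≠ 0 := (Real.Gamma_pos_of_pos (by linarith)).ne'
  have hΓane : Real.Gamma a ≠ 0 := (Real.Gamma_pos_of_pos ha).ne'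
  have hD : HasDerivAt (fun t => betaFn t b)
      ((deriv Real.Gamma a * Real.Gamma b * Real.Gamma (a + b)
        - Real.Gamma a * Real.Gamma b * deriv Real.Gamma (a + b)) / Real.Gamma (a + b) ^ 2) a := by
    have := (hΓa.mul_const (Real.Gamma b)).div hcomp hΓabne
    exact this
  have key : (∫ x, F' a x ∂μ) = (deriv Real.Gamma a * Real.Gamma b * Real.Gamma (a + b)
        - Real.Gamma a * Real.Gamma b * deriv Real.Gamma (a + b)) / Real.Gamma (a + b) ^ 2 :=
    hInt'.unique hD
  have : (∫ x in Set.Ioo (0 : ℝ) 1, x ^ (a - 1) * (1 - x) ^ (b - 1) * Real.log x) = ∫ x, F' a x ∂μ := rfl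
  rw [this, key, digamma_eq ha, digamma_eq (by linarith : (0:ℝ) < a + b), betaFn]
  field_simp
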